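/- A subset of N^d is semilinear if and only if its complement (in N^d) is semilinear. -/

import Mathlib

/-- A linear subset of ℕ^d: a base point plus all ℕ-combinations of finitely
many period vectors. -/
def IsLinear {d : ℕ} (S : Set (Fin d → ℕ)) : Prop :=
  ∃ (b : Fin d → ℕ) (P : Finset (Fin d → ℕ)),
    S = (fun m => b + m) '' (AddSubmonoid.closure (P : Set (Fin d → ℕ)) : Set (Fin d → ℕ))

/-- A semilinear subset of ℕ^d: a finite union of linear sets. -/
def IsSemilinear {d : ℕ} (S : Set (Fin d → ℕ)) : Prop :=
  ∃ (n : ℕ) (L : Fin n → Set (Fin d → ℕ)), (∀ i, IsLinear (L i)) ∧ S = ⋃ i, L i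

open Set AddSubmonoid

/-- finite unions of sets from a class `C`. -/
def IsFU {α : Type*} (C : Set α → Prop) (S : Set α) : Prop :=
  ∃ (n : ℕ) (L : Fin n → Set α), (∀ i, C (L i)) ∧ S = ⋃ i, L i

variable {α : Type*} {C C' : Set α → Prop} {S T : Set α}

lemma isFU_of (h : C S) : IsFU C S :=
  ⟨1, fun _ => S, fun _ => h, (Set.iUnion_const S).symm⟩

lemma isFU_empty : IsFU C (∅ : Set α) :=
  ⟨0, Fin.elim0, fun i => i.elim0, by simp⟩

lemma IsFU.union : IsFU C S → IsFU C T → IsFU C (S ∪ T) := by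
  rintro ⟨n, L, hL, rfl⟩ ⟨m, M, hM, rfl⟩
  refine ⟨n + m, Fin.append L M, fun i => ?_, ?_⟩
  · refine Fin.addCases (fun i => ?_) (fun i => ?_) i
    · rw [Fin.append_left]; exact hL i
    · rw [Fin.append_right]; exact hM i
  · ext x
    simp only [Set.mem_union, Set.mem_iUnion]
    constructor
    · rintro (⟨i, h⟩ | ⟨j, h⟩)
      · exact ⟨Fin.castAdd m i, by rwa [Fin.append_left]⟩
      · exact ⟨Fin.natAdd n j, by rwa [Fin.append_right]⟩
    · rintro ⟨i, h⟩
      revert h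
      refine Fin.addCases (fun i h => ?_) (fun j h => ?_) i
      · rw [Fin.append_left] at h; exact Or.inl ⟨i, h⟩
      · rw [Fin.append_right] at h; exact Or.inr ⟨j, h⟩

lemma IsFU.iUnion_fin : ∀ {n : ℕ} {T : Fin n → Set α}, (∀ i, IsFU C (T i)) → IsFU C (⋃ i, T i) := by
  intro n
  induction n with
  | zero => intro T _; rw [Set.iUnion_of_empty]; exact isFU_empty
  | succ n ih =>
      intro T h
      have : (⋃ i, T i) = T 0 ∪ ⋃ i : Fin n, T i.succ := by
        ext x
        simp only [Set.mem_iUnion, Set.mem_union]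
        constructor
        · rintro ⟨i, hi⟩
          rcases Fin.eq_zero_or_eq_succ i with rfl | ⟨j, rfl⟩
          · exact Or.inl hi
          · exact Or.inr ⟨j, hi⟩
        · rintro (h | ⟨j, hj⟩)
          exacts [⟨0, h⟩, ⟨j.succ, hj⟩]
      rw [this]
      exact (h 0).union (ih fun i => h i.succ)

lemma IsFU.biUnion {ι : Type*} {s : Finset ι} {T : ι → Set α}
    (h : ∀ i ∈ s, IsFU C (T i)) : IsFU C (⋃ i ∈ s, T i) := by
  classical
  induction s using Finset.induction_on with
  | empty => simp only [Finset.notMem_empty, Set.iUnion_of_empty, Set.iUnion_empty]; exact isFU_empty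
  | @insert a s ha ih =>
      rw [Finset.set_biUnion_insert]
      exact (h a (Finset.mem_insert_self a s)).union
        (ih fun i hi => h i (Finset.mem_insert_of_mem hi))

lemma isSemilinear_iff_isFU {d : ℕ} {S : Set (Fin d → ℕ)} :
    IsSemilinear S ↔ IsFU IsLinear S := Iff.rfl

section Closure
variable {M : Type*} [AddCommMonoid M]

lemma closure_range_fin {n : ℕ} (v : Fin n → M) :
    (AddSubmonoid.closure (Set.range v) : Set M) = {x | ∃ k : Fin n → ℕ, x = ∑ i, k i • v i} := by
  ext x
  constructor
  · intro hx
    induction hx using AddSubmonoid.closure_induction with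
    | mem y hy =>
        obtain ⟨j, rfl⟩ := hy
        exact ⟨fun i => if i = j then 1 else 0, by simp [ite_smul]⟩
    | zero => exact ⟨0, by simp⟩
    | add y z _ _ hy hz =>
        obtain ⟨k₁, rfl⟩ := hy
        obtain ⟨k₂, rfl⟩ := hz
        exact ⟨k₁ + k₂, by simp [add_smul, Finset.sum_add_distrib]⟩
  · rintro ⟨k, rfl⟩
    exact AddSubmonoid.sum_mem _ fun i _ =>
      AddSubmonoid.nsmul_mem _ (AddSubmonoid.subset_closure (Set.mem_range_self i)) (k i)

lemma closure_finset' (P : Finset M) :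
    (AddSubmonoid.closure (P : Set M) : Set M) = {x | ∃ k : M → ℕ, x = ∑ p ∈ P, k p • p} := by
  classical
  ext x
  constructor
  · intro hx
    induction hx using AddSubmonoid.closure_induction with
    | mem y hy =>
        exact ⟨fun p => if p = y then 1 else 0, by
          simp only [ite_smul, one_smul, zero_smul]
          rw [Finset.sum_ite_eq' P y, if_pos (Finset.mem_coe.mp hy)]⟩
    | zero => exact ⟨0, by simp⟩
    | add y z _ _ hy hz =>
        obtain ⟨k₁, rfl⟩ := hy
        obtain ⟨k₂, rfl⟩ := hz
        exact ⟨k₁ + k₂, by simp [add_smul, Finset.sum_add_distrib]⟩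
  · rintro ⟨k, rfl⟩
    exact AddSubmonoid.sum_mem _ fun p hp =>
      AddSubmonoid.nsmul_mem _ (AddSubmonoid.subset_closure hp) (k p)

end Closure

section LinF
variable {d e n : ℕ}

/-- linear set given by base point and `Fin n`-indexed generators. -/
def linF (b : Fin d → ℕ) {n : ℕ} (v : Fin n → (Fin d → ℕ)) : Set (Fin d → ℕ) :=
  {x | ∃ k : Fin n → ℕ, x = b + ∑ i, k i • v i}

lemma isLinear_linF (b : Fin d → ℕ) (v : Fin n → (Fin d → ℕ)) : IsLinear (linF b v) := by
  classical
  refine ⟨b, Finset.univ.image v, ?_⟩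
  have hc : ((Finset.univ.image v : Finset (Fin d → ℕ)) : Set (Fin d → ℕ)) = Set.range v := by
    simp
  rw [hc, closure_range_fin]
  ext x
  simp only [linF, Set.mem_setOf_eq, Set.mem_image]
  constructor
  · rintro ⟨k, rfl⟩; exact ⟨_, ⟨k, rfl⟩, rfl⟩
  · rintro ⟨m, ⟨k, rfl⟩, rfl⟩; exact ⟨k, rfl⟩

lemma isLinear_iff {S : Set (Fin d → ℕ)} :
    IsLinear S ↔ ∃ (b : Fin d → ℕ) (n : ℕ) (v : Fin n → (Fin d → ℕ)), S = linF b v := by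
  constructor
  · rintro ⟨b, P, rfl⟩
    refine ⟨b, P.card, fun i => (P.equivFin.symm i : Fin d → ℕ), ?_⟩
    have hr : Set.range (fun i => (P.equivFin.symm i : Fin d → ℕ)) = (P : Set (Fin d → ℕ)) := by
      ext x
      simp only [Set.mem_range, Finset.mem_coe]
      constructor
      · rintro ⟨i, rfl⟩; exact (P.equivFin.symm i).2
      · intro hx; exact ⟨P.equivFin ⟨x, hx⟩, by simp⟩
    rw [← hr, closure_range_fin]
    ext x
    simp only [linF, Set.mem_setOf_eq, Set.mem_image]
    constructor
    · rintro ⟨m, ⟨k, rfl⟩, rfl⟩; exact ⟨k, rfl⟩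
    · rintro ⟨k, rfl⟩; exact ⟨_, ⟨k, rfl⟩, rfl⟩
  · rintro ⟨b, n, v, rfl⟩; exact isLinear_linF b v

lemma isSemilinear_univ : IsSemilinear (Set.univ : Set (Fin d → ℕ)) := by
  classical
  refine isFU_of (isLinear_iff.mpr ⟨0, d, fun j => Pi.single j 1, ?_⟩)
  ext x
  simp only [Set.mem_univ, linF, Set.mem_setOf_eq, true_iff]
  refine ⟨x, ?_⟩
  funext i
  simp [Finset.sum_apply, Pi.single_apply]

lemma IsLinear.image_hom {S : Set (Fin e → ℕ)} (f : (Fin e → ℕ) →+ (Fin d → ℕ))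
    (h : IsLinear S) : IsLinear (f '' S) := by
  classical
  obtain ⟨b, P, rfl⟩ := h
  refine ⟨f b, P.image f, ?_⟩
  rw [Finset.coe_image, ← AddMonoidHom.map_mclosure, ← Set.image_comp,
    AddSubmonoid.coe_map, ← Set.image_comp]
  congr 1
  funext m
  simp

lemma IsSemilinear.image_hom {S : Set (Fin e → ℕ)} (f : (Fin e → ℕ) →+ (Fin d → ℕ))
    (h : IsSemilinear S) : IsSemilinear (f '' S) := by
  obtain ⟨m, L, hL, rfl⟩ := h
  rw [Set.image_iUnion]
  exact ⟨m, _, fun i => (hL i).image_hom f, rfl⟩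

lemma IsSemilinear.translate {S : Set (Fin d → ℕ)} (a : Fin d → ℕ)
    (h : IsSemilinear S) : IsSemilinear ((fun x => a + x) '' S) := by
  obtain ⟨m, L, hL, rfl⟩ := h
  rw [Set.image_iUnion]
  refine ⟨m, _, fun i => ?_, rfl⟩
  obtain ⟨b, P, hP⟩ := hL i
  rw [hP]
  exact ⟨a + b, P, by rw [← Set.image_comp]; congr 1; funext x; simp [add_assoc]⟩

lemma isSemilinear_iUnion_fin {T : Fin n → Set (Fin d → ℕ)}
    (h : ∀ i, IsSemilinear (T i)) : IsSemilinear (⋃ i, T i) :=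
  IsFU.iUnion_fin h

lemma isSemilinear_biUnion {ι : Type*} {s : Finset ι} {T : ι → Set (Fin d → ℕ)}
    (h : ∀ i ∈ s, IsSemilinear (T i)) : IsSemilinear (⋃ i ∈ s, T i) :=
  IsFU.biUnion h

end LinF
section Equalizer

variable {e : ℕ}

lemma pi_add_sub_cancel {x y : Fin e → ℕ} (h : y ≤ x) : y + (x - y) = x :=
  funext fun j => Nat.add_sub_cancel' (h j)

lemma pi_eq_of_le_of_sum_le {y m : Fin e → ℕ} (h : y ≤ m) (hs : ∑ j, m j ≤ ∑ j, y j) :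
    y = m := by
  funext j
  by_contra hne
  have hlt : y j < m j := lt_of_le_of_ne (h j) hne
  have := Finset.sum_lt_sum (fun i (_ : i ∈ Finset.univ) => h i) ⟨j, Finset.mem_univ j, hlt⟩
  omega

lemma exists_min_below {A : Set (Fin e → ℕ)} {x : Fin e → ℕ} (hx : x ∈ A) :
    ∃ m ∈ A, m ≤ x ∧ ∀ y ∈ A, y ≤ m → y = m := by
  set W := (fun y : Fin e → ℕ => ∑ j, y j) '' {y | y ∈ A ∧ y ≤ x} with hW
  have hWne : W.Nonempty := ⟨_, ⟨x, ⟨hx, le_refl x⟩, rfl⟩⟩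
  obtain ⟨m, ⟨hmA, hmx⟩, hmsum⟩ := Nat.sInf_mem hWne
  refine ⟨m, hmA, hmx, fun y hyA hym => ?_⟩
  have h1 : sInf W ≤ ∑ j, y j := Nat.sInf_le ⟨y, ⟨hyA, le_trans hym hmx⟩, rfl⟩
  exact pi_eq_of_le_of_sum_le hym (le_trans (le_of_eq hmsum) h1)

lemma sum_pos_of_ne_zero {m : Fin e → ℕ} (hm : m ≠ 0) : 0 < ∑ j, m j := by
  by_contra hc
  push_neg at hc
  have h0 : ∑ j, m j = 0 := Nat.le_zero.mp hc
  exact hm (funext fun j => Finset.sum_eq_zero_iff.mp h0 j (Finset.mem_univ j))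

variable {N : Type*} [AddCancelCommMonoid N]

/-- every homogeneous solution is a sum of minimal nonzero homogeneous solutions. -/
lemma hom_mem_closure (f g : (Fin e → ℕ) →+ N) :
    ∀ (s : ℕ) (h : Fin e → ℕ), (∑ j, h j) = s → f h = g h →
      h ∈ AddSubmonoid.closure
        {m | (f m = g m ∧ m ≠ 0) ∧ ∀ y, (f y = g y ∧ y ≠ 0) → y ≤ m → y = m} := by
  intro s
  induction s using Nat.strong_induction_on with
  | _ s ih =>
    intro h hsum hfg
    by_cases h0 : h = 0
    · subst h0; exact zero_mem _
    · obtain ⟨m, ⟨hm1, hm2⟩, hmle, hmmin⟩ :=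
        exists_min_below (A := {y | f y = g y ∧ y ≠ 0}) (x := h) ⟨hfg, h0⟩
      have hdec : m + (h - m) = h := pi_add_sub_cancel hmle
      have hfg' : f (h - m) = g (h - m) := by
        rw [← hdec, map_add, map_add, hm1] at hfg
        exact add_left_cancel hfg
      have hmem : m ∈ {m | (f m = g m ∧ m ≠ 0) ∧ ∀ y, (f y = g y ∧ y ≠ 0) → y ≤ m → y = m} :=
        ⟨⟨hm1, hm2⟩, fun y hy hle => hmmin y hy hle⟩
      by_cases hh : h - m = 0
      · have : h = m := by rw [← hdec, hh, add_zero]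
        rw [this]
        exact AddSubmonoid.subset_closure hmem
      · have hsum2 : (∑ j, m j) + (∑ j, (h - m) j) = s := by
          rw [← hsum, ← Finset.sum_add_distrib]
          exact Finset.sum_congr rfl fun j _ => congrFun hdec j
        have hlt : (∑ j, (h - m) j) < s := by
          have := sum_pos_of_ne_zero hm2; omega
        have := ih _ hlt (h - m) rfl hfg'
        rw [← hdec]
        exact AddSubmonoid.add_mem _ (AddSubmonoid.subset_closure hmem) this

lemma isSemilinear_equalizer (f g : (Fin e → ℕ) →+ N) (c₁ c₂ : N) :
    IsSemilinear {x : Fin e → ℕ | f x + c₁ = g x + c₂} := by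
  classical
  set Sol := {x : Fin e → ℕ | f x + c₁ = g x + c₂} with hSolDef
  set MinSol := {m | m ∈ Sol ∧ ∀ y ∈ Sol, y ≤ m → y = m} with hMinSolDef
  set MinHom := {m : Fin e → ℕ |
    (f m = g m ∧ m ≠ 0) ∧ ∀ y, (f y = g y ∧ y ≠ 0) → y ≤ m → y = m} with hMinHomDef
  have hanti1 : IsAntichain (· ≤ ·) MinSol := by
    intro a ha b hb hne hab
    exact hne (hb.2 a ha.1 hab)
  have hanti2 : IsAntichain (· ≤ ·) MinHom := by
    intro a ha b hb hne hab
    exact hne (hb.2 a ha.1 hab)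
  have hfin1 : MinSol.Finite := hanti1.finite_of_partiallyWellOrderedOn
    (Set.isPWO_of_wellQuasiOrderedLE MinSol)
  have hfin2 : MinHom.Finite := hanti2.finite_of_partiallyWellOrderedOn
    (Set.isPWO_of_wellQuasiOrderedLE MinHom)
  have hclo : (hfin2.toFinset : Set (Fin e → ℕ)) = MinHom := hfin2.coe_toFinset
  have key : Sol = ⋃ m ∈ hfin1.toFinset,
      (fun x => m + x) '' (AddSubmonoid.closure (hfin2.toFinset : Set (Fin e → ℕ)) :
        Set (Fin e → ℕ)) := by
    ext x
    simp only [Set.mem_iUnion, Set.mem_image, Set.Finite.mem_toFinset, exists_prop]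
    constructor
    · intro hx
      obtain ⟨m, hmSol, hmle, hmmin⟩ := exists_min_below (A := Sol) hx
      have hdec : m + (x - m) = x := pi_add_sub_cancel hmle
      have hfg' : f (x - m) = g (x - m) := by
        have hx' : f x + c₁ = g x + c₂ := hx
        have hm' : f m + c₁ = g m + c₂ := hmSol
        rw [← hdec, map_add, map_add] at hx'
        have h3 : (f m + c₁) + f (x - m) = (g m + c₂) + g (x - m) := by
          calc (f m + c₁) + f (x - m) = f m + f (x - m) + c₁ := by abel
            _ = g m + g (x - m) + c₂ := hx'
            _ = (g m + c₂) + g (x - m) := by abel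
        rw [hm'] at h3
        exact add_left_cancel h3
      refine ⟨m, ⟨hmSol, hmmin⟩, x - m, ?_, hdec⟩
      rw [hclo]
      exact hom_mem_closure f g _ (x - m) rfl hfg'
    · rintro ⟨m, hm, y, hy, rfl⟩
      have hyH : f y = g y := by
        rw [hclo] at hy
        have hle : AddSubmonoid.closure MinHom ≤ AddMonoidHom.eqLocusM f g :=
          AddSubmonoid.closure_le.mpr fun z hz => hz.1.1
        exact hle hy
      have hm' : f m + c₁ = g m + c₂ := hm.1
      show f (m + y) + c₁ = g (m + y) + c₂
      rw [map_add, map_add, hyH]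
      calc f m + g y + c₁ = (f m + c₁) + g y := by abel
        _ = (g m + c₂) + g y := by rw [hm']
        _ = g m + g y + c₂ := by abel
  rw [key]
  exact isSemilinear_biUnion fun m _ => isFU_of ⟨m, hfin2.toFinset, rfl⟩

end Equalizer
section Forms
variable {d e n : ℕ}

/-- scalar linear form with natural coefficients. -/
def Fw {e : ℕ} (w : Fin e → ℕ) : (Fin e → ℕ) →+ ℕ where
  toFun := fun x => ∑ j, w j * x j
  map_zero' := by simp
  map_add' := fun x y => by simp [mul_add, Finset.sum_add_distrib]

@[simp] lemma Fw_apply {e : ℕ} (w x : Fin e → ℕ) : Fw w x = ∑ j, w j * x j := rfl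

/-- drop the last coordinate. -/
def resHom (e : ℕ) : (Fin (e + 1) → ℕ) →+ (Fin e → ℕ) where
  toFun := fun z => z ∘ Fin.castSucc
  map_zero' := rfl
  map_add' := fun _ _ => rfl

@[simp] lemma resHom_apply {e : ℕ} (z : Fin (e + 1) → ℕ) (j : Fin e) :
    resHom e z j = z j.castSucc := rfl

lemma resHom_snoc {e : ℕ} (x : Fin e → ℕ) (t : ℕ) : resHom e (Fin.snoc x t) = x :=
  funext fun j => by simp

lemma Fw_snoc {e : ℕ} (w : Fin e → ℕ) (c : ℕ) (z : Fin (e + 1) → ℕ) :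
    Fw (Fin.snoc w c) z = Fw w (resHom e z) + c * z (Fin.last e) := by
  simp only [Fw_apply]
  rw [Fin.sum_univ_castSucc]
  simp

lemma isSemilinear_exists_eq (w₁ w₂ : Fin d → ℕ) (c₁ c₂ m : ℕ) :
    IsSemilinear {x : Fin d → ℕ | ∃ t : ℕ, Fw w₁ x + c₁ = Fw w₂ x + c₂ + m * t} := by
  have hE := isSemilinear_equalizer (Fw (Fin.snoc w₁ 0)) (Fw (Fin.snoc w₂ m)) c₁ c₂
  have himg := hE.image_hom (resHom d)
  have key : {x : Fin d → ℕ | ∃ t : ℕ, Fw w₁ x + c₁ = Fw w₂ x + c₂ + m * t}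
      = resHom d '' {z | Fw (Fin.snoc w₁ 0) z + c₁ = Fw (Fin.snoc w₂ m) z + c₂} := by
    ext x
    simp only [Set.mem_setOf_eq, Set.mem_image]
    constructor
    · rintro ⟨t, ht⟩
      refine ⟨Fin.snoc x t, ?_, resHom_snoc x t⟩
      show Fw (Fin.snoc w₁ 0) (Fin.snoc x t) + c₁ = Fw (Fin.snoc w₂ m) (Fin.snoc x t) + c₂
      rw [Fw_snoc, Fw_snoc, resHom_snoc]
      simp only [Fin.snoc_last]
      omega
    · rintro ⟨z, hz, rfl⟩
      refine ⟨z (Fin.last d), ?_⟩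
      have := hz
      rw [Fw_snoc, Fw_snoc] at this
      omega
  rw [key]
  exact himg

lemma isSemilinear_lt (w₁ w₂ : Fin d → ℕ) (c₁ c₂ : ℕ) :
    IsSemilinear {x : Fin d → ℕ | Fw w₁ x + c₁ < Fw w₂ x + c₂} := by
  have h := isSemilinear_exists_eq w₂ w₁ c₂ (c₁ + 1) 1
  have key : {x : Fin d → ℕ | Fw w₁ x + c₁ < Fw w₂ x + c₂}
      = {x : Fin d → ℕ | ∃ t : ℕ, Fw w₂ x + c₂ = Fw w₁ x + (c₁ + 1) + 1 * t} := by
    ext x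
    simp only [Set.mem_setOf_eq, one_mul]
    constructor
    · intro hlt; exact ⟨(Fw w₂ x + c₂) - (Fw w₁ x + c₁ + 1), by omega⟩
    · rintro ⟨t, ht⟩; omega
  rw [key]
  exact h

end Forms

section Inter
variable {d n₁ n₂ : ℕ}

def leftHom (n₁ n₂ d : ℕ) (v : Fin n₁ → Fin d → ℕ) : (Fin (n₁ + n₂) → ℕ) →+ (Fin d → ℕ) where
  toFun := fun z => ∑ i, z (Fin.castAdd n₂ i) • v i
  map_zero' := by simp
  map_add' := fun x y => by simp [add_smul, Finset.sum_add_distrib]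

def rightHom (n₁ n₂ d : ℕ) (v : Fin n₂ → Fin d → ℕ) : (Fin (n₁ + n₂) → ℕ) →+ (Fin d → ℕ) where
  toFun := fun z => ∑ i, z (Fin.natAdd n₁ i) • v i
  map_zero' := by simp
  map_add' := fun x y => by simp [add_smul, Finset.sum_add_distrib]

lemma isSemilinear_inter_linF (b₁ b₂ : Fin d → ℕ) (v₁ : Fin n₁ → Fin d → ℕ)
    (v₂ : Fin n₂ → Fin d → ℕ) : IsSemilinear (linF b₁ v₁ ∩ linF b₂ v₂) := by
  have hE := isSemilinear_equalizer (leftHom n₁ n₂ d v₁) (rightHom n₁ n₂ d v₂) b₁ b₂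
  have key : linF b₁ v₁ ∩ linF b₂ v₂ = (fun x => b₁ + x) ''
      ((leftHom n₁ n₂ d v₁) '' {z | leftHom n₁ n₂ d v₁ z + b₁ = rightHom n₁ n₂ d v₂ z + b₂}) := by
    ext x
    simp only [Set.mem_inter_iff, linF, Set.mem_setOf_eq, Set.mem_image]
    constructor
    · rintro ⟨⟨k, hk⟩, ⟨l, hl⟩⟩
      refine ⟨leftHom n₁ n₂ d v₁ (Fin.append k l), ⟨Fin.append k l, ?_, rfl⟩, ?_⟩
      · have h1 : leftHom n₁ n₂ d v₁ (Fin.append k l) = ∑ i, k i • v₁ i := by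
          show (∑ i, Fin.append k l (Fin.castAdd n₂ i) • v₁ i) = _
          exact Finset.sum_congr rfl fun i _ => by rw [Fin.append_left]
        have h2 : rightHom n₁ n₂ d v₂ (Fin.append k l) = ∑ i, l i • v₂ i := by
          show (∑ i, Fin.append k l (Fin.natAdd n₁ i) • v₂ i) = _
          exact Finset.sum_congr rfl fun i _ => by rw [Fin.append_right]
        show (leftHom n₁ n₂ d v₁) (Fin.append k l) + b₁ = (rightHom n₁ n₂ d v₂) (Fin.append k l) + b₂
        rw [h1, h2, add_comm _ b₁, add_comm _ b₂, ← hk, ← hl]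
      · have h1 : leftHom n₁ n₂ d v₁ (Fin.append k l) = ∑ i, k i • v₁ i := by
          show (∑ i, Fin.append k l (Fin.castAdd n₂ i) • v₁ i) = _
          exact Finset.sum_congr rfl fun i _ => by rw [Fin.append_left]
        rw [h1, ← hk]
    · rintro ⟨y, ⟨z, hz, rfl⟩, rfl⟩
      constructor
      · exact ⟨fun i => z (Fin.castAdd n₂ i), rfl⟩
      · refine ⟨fun i => z (Fin.natAdd n₁ i), ?_⟩
        have : leftHom n₁ n₂ d v₁ z + b₁ = rightHom n₁ n₂ d v₂ z + b₂ := hz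
        rw [add_comm b₁ _, this, add_comm _ b₂]
        rfl
  rw [key]
  exact (hE.image_hom _).translate b₁

lemma IsSemilinear.inter {S T : Set (Fin d → ℕ)} (hS : IsSemilinear S) (hT : IsSemilinear T) :
    IsSemilinear (S ∩ T) := by
  obtain ⟨n, L, hL, rfl⟩ := hS
  obtain ⟨m, M, hM, rfl⟩ := hT
  rw [Set.iUnion_inter]
  refine isSemilinear_iUnion_fin fun i => ?_
  rw [Set.inter_iUnion]
  refine isSemilinear_iUnion_fin fun j => ?_
  obtain ⟨b₁, n₁, v₁, h₁⟩ := isLinear_iff.mp (hL i)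
  obtain ⟨b₂, n₂, v₂, h₂⟩ := isLinear_iff.mp (hM j)
  rw [h₁, h₂]
  exact isSemilinear_inter_linF b₁ b₂ v₁ v₂

lemma isSemilinear_iInter_fin :
    ∀ {n : ℕ} {T : Fin n → Set (Fin d → ℕ)}, (∀ i, IsSemilinear (T i)) →
      IsSemilinear (⋂ i, T i) := by
  intro n
  induction n with
  | zero => intro T _; rw [Set.iInter_of_empty]; exact isSemilinear_univ
  | succ n ih =>
      intro T h
      have : (⋂ i, T i) = T 0 ∩ ⋂ i : Fin n, T i.succ := by
        ext x
        simp only [Set.mem_iInter, Set.mem_inter_iff]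
        constructor
        · intro hx; exact ⟨hx 0, fun i => hx i.succ⟩
        · rintro ⟨h0, hs⟩ i
          rcases Fin.eq_zero_or_eq_succ i with rfl | ⟨j, rfl⟩
          exacts [h0, hs j]
      rw [this]
      exact (h 0).inter (ih fun i => h i.succ)

end Inter
section Simple
variable {d n : ℕ}

/-- coordinatewise cast to ℚ. -/
def ratCast {d : ℕ} (x : Fin d → ℕ) : Fin d → ℚ := fun j => x j

lemma ratCast_inj {x y : Fin d → ℕ} (h : ratCast x = ratCast y) : x = y :=
  funext fun j => Nat.cast_injective (congrFun h j)

lemma ratCast_sum_smul {n : ℕ} (k : Fin n → ℕ) (v : Fin n → Fin d → ℕ) :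
    ratCast (∑ i, k i • v i) = ∑ i, (k i : ℚ) • ratCast (v i) := by
  funext j
  simp only [ratCast, Finset.sum_apply, Pi.smul_apply, smul_eq_mul]
  push_cast
  rfl

lemma ratCast_add (x y : Fin d → ℕ) : ratCast (x + y) = ratCast x + ratCast y :=
  funext fun j => by simp [ratCast]

/-- simple linear set: generators are ℚ-linearly independent. -/
def IsSimple {d : ℕ} (S : Set (Fin d → ℕ)) : Prop :=
  ∃ (b : Fin d → ℕ) (n : ℕ) (v : Fin n → Fin d → ℕ),
    LinearIndependent ℚ (fun i => ratCast (v i)) ∧ S = linF b v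

lemma exists_int_mul {n : ℕ} (g : Fin n → ℚ) :
    ∃ (M : ℕ) (z : Fin n → ℤ), 0 < M ∧ ∀ i, (z i : ℚ) = M * g i := by
  refine ⟨∏ j, (g j).den, fun i => ((∏ j, (g j).den) / (g i).den : ℕ) * (g i).num,
    Finset.prod_pos fun i _ => (g i).pos, fun i => ?_⟩
  have hdvd : (g i).den ∣ ∏ j, (g j).den := Finset.dvd_prod_of_mem _ (Finset.mem_univ i)
  have hden : ((g i).den : ℚ) ≠ 0 := Nat.cast_ne_zero.mpr (g i).den_nz
  have h1 : (((∏ j, (g j).den) / (g i).den : ℕ) : ℚ)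
      = ((∏ j, (g j).den : ℕ) : ℚ) / ((g i).den : ℚ) := Nat.cast_div hdvd hden
  have h2 : (((((∏ j, (g j).den) / (g i).den : ℕ) : ℤ) * (g i).num : ℤ) : ℚ)
      = (((∏ j, (g j).den) / (g i).den : ℕ) : ℚ) * ((g i).num : ℚ) := by
    rw [Int.cast_mul, Int.cast_natCast]
  rw [h2, h1, div_mul_eq_mul_div, mul_div_assoc, Rat.num_div_den]

/-- key decomposition step: a dependency relation lets us bound one coefficient. -/
lemma linF_decomp {d m : ℕ} (b : Fin d → ℕ) (v : Fin (m + 1) → Fin d → ℕ)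
    (a c : Fin (m + 1) → ℕ) (hdisj : ∀ i, a i = 0 ∨ c i = 0)
    (hrel : ∑ i, a i • v i = ∑ i, c i • v i) (i₀ : Fin (m + 1)) (ha : a i₀ ≠ 0) :
    linF b v = ⋃ i ∈ Finset.univ.filter (fun i => a i ≠ 0),
      ⋃ r ∈ Finset.range (a i), linF (b + r • v i) (v ∘ i.succAbove) := by
  classical
  ext x
  simp only [linF, Set.mem_setOf_eq, Set.mem_iUnion, Finset.mem_filter, Finset.mem_univ,
    true_and, Finset.mem_range, exists_prop]
  constructor
  · rintro ⟨k, rfl⟩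
    set R : Set (Fin (m + 1) → ℕ) :=
      {k' | b + ∑ i, k' i • v i = b + ∑ i, k i • v i} with hRdef
    set F := Finset.univ.filter (fun i => a i ≠ 0) with hFdef
    set W := (fun k' : Fin (m + 1) → ℕ => ∑ i ∈ F, k' i) '' R with hWdef
    have hWne : W.Nonempty := ⟨∑ i ∈ F, k i, ⟨k, rfl, rfl⟩⟩
    obtain ⟨k', hk'R, hk'sum⟩ := Nat.sInf_mem hWne
    replace hk'sum : (∑ i ∈ F, k' i) = sInf W := hk'sum
    by_cases hex : ∃ i, a i ≠ 0 ∧ k' i < a i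
    · obtain ⟨i, hai, hki⟩ := hex
      refine ⟨i, hai, k' i, hki, k' ∘ i.succAbove, ?_⟩
      have hx : b + ∑ j, k' j • v j = b + ∑ j, k j • v j := hk'R
      rw [← hx, Fin.sum_univ_succAbove (fun j => k' j • v j) i, ← add_assoc]
      rfl
    · exfalso
      push_neg at hex
      obtain ⟨k'', hk''⟩ : ∃ k'' : Fin (m + 1) → ℕ, ∀ i, k'' i = k' i - a i + c i :=
        ⟨fun i => k' i - a i + c i, fun _ => rfl⟩
      have hpt : ∀ i, k'' i + a i = k' i + c i := by
        intro i
        have hk2 := hk'' i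
        by_cases h0 : a i = 0
        · omega
        · have h1 := hex i h0
          rcases hdisj i with h | h
          · exact absurd h h0
          · omega
      have hsum_eq : ∑ i, k'' i • v i = ∑ i, k' i • v i := by
        have h2 : (∑ i, k'' i • v i) + ∑ i, a i • v i
            = (∑ i, k' i • v i) + ∑ i, c i • v i := by
          rw [← Finset.sum_add_distrib, ← Finset.sum_add_distrib]
          exact Finset.sum_congr rfl fun i _ => by rw [← add_smul, ← add_smul, hpt i]
        rw [hrel] at h2
        exact add_right_cancel h2
      have hk''R : k'' ∈ R := by
        show b + ∑ i, k'' i • v i = b + ∑ i, k i • v i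
        rw [hsum_eq]; exact hk'R
      have hfil : ∀ i ∈ F, k'' i + a i = k' i := by
        intro i hi
        rw [hFdef, Finset.mem_filter] at hi
        have h3 := (hdisj i).resolve_left hi.2
        have := hpt i
        omega
      have hs1 : (∑ i ∈ F, k'' i) + (∑ i ∈ F, a i) = ∑ i ∈ F, k' i := by
        rw [← Finset.sum_add_distrib]
        exact Finset.sum_congr rfl hfil
      have hi₀F : i₀ ∈ F := by rw [hFdef, Finset.mem_filter]; exact ⟨Finset.mem_univ _, ha⟩
      have hpos : 0 < ∑ i ∈ F, a i :=
        lt_of_lt_of_le (Nat.pos_of_ne_zero ha)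
          (Finset.single_le_sum (fun i _ => Nat.zero_le (a i)) hi₀F)
      have hle : sInf W ≤ ∑ i ∈ F, k'' i := Nat.sInf_le ⟨k'', hk''R, rfl⟩
      omega
  · rintro ⟨i, hai, r, hr, k, rfl⟩
    refine ⟨i.insertNth (α := fun _ => ℕ) r k, ?_⟩
    rw [Fin.sum_univ_succAbove (fun j => i.insertNth (α := fun _ => ℕ) r k j • v j) i]
    simp only [Fin.insertNth_apply_same, Fin.insertNth_apply_succAbove]
    rw [← add_assoc]
    rfl

end Simple
section Decomp
variable {d : ℕ}

lemma linF_isFU_simple : ∀ {n : ℕ} (b : Fin d → ℕ) (v : Fin n → Fin d → ℕ),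
    IsFU IsSimple (linF b v) := by
  intro n
  induction n with
  | zero =>
      intro b v
      exact isFU_of ⟨b, 0, v, linearIndependent_empty_type, rfl⟩
  | succ m ih =>
      intro b v
      by_cases hzero : ∃ i, v i = 0
      · obtain ⟨i, hvi⟩ := hzero
        have hEq : linF b v = linF b (v ∘ i.succAbove) := by
          ext x
          simp only [linF, Set.mem_setOf_eq]
          constructor
          · rintro ⟨k, rfl⟩
            refine ⟨k ∘ i.succAbove, ?_⟩
            rw [Fin.sum_univ_succAbove (fun j => k j • v j) i, hvi, smul_zero, zero_add]
            rfl
          · rintro ⟨k, rfl⟩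
            refine ⟨i.insertNth (α := fun _ => ℕ) 0 k, ?_⟩
            rw [Fin.sum_univ_succAbove (fun j => i.insertNth (α := fun _ => ℕ) 0 k j • v j) i]
            simp only [Fin.insertNth_apply_same, Fin.insertNth_apply_succAbove, hvi,
              smul_zero, zero_smul, zero_add]
            rfl
        rw [hEq]
        exact ih b _
      · by_cases hind : LinearIndependent ℚ (fun i => ratCast (v i))
        · exact isFU_of ⟨b, m + 1, v, hind, rfl⟩
        · obtain ⟨g, hrel, i₀, hg⟩ := Fintype.not_linearIndependent_iff.mp hind
          obtain ⟨M, z, hM, hz⟩ := exists_int_mul g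
          have hzrel : ∑ i, (z i : ℚ) • ratCast (v i) = 0 := by
            calc ∑ i, (z i : ℚ) • ratCast (v i)
                = (M : ℚ) • ∑ i, g i • ratCast (v i) := by
                  rw [Finset.smul_sum]
                  exact Finset.sum_congr rfl fun i _ => by rw [hz i, mul_smul]
              _ = 0 := by rw [hrel, smul_zero]
          obtain ⟨a, hadef⟩ : ∃ a : Fin (m + 1) → ℕ, ∀ i, a i = (z i).toNat :=
            ⟨fun i => (z i).toNat, fun _ => rfl⟩
          obtain ⟨c, hcdef⟩ : ∃ c : Fin (m + 1) → ℕ, ∀ i, c i = (-(z i)).toNat :=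
            ⟨fun i => (-(z i)).toNat, fun _ => rfl⟩
          have hzi : ∀ i, (a i : ℤ) - (c i : ℤ) = z i := fun i => by
            rw [hadef i, hcdef i]; omega
          have hdisj : ∀ i, a i = 0 ∨ c i = 0 := fun i => by
            rw [hadef i, hcdef i]; omega
          have hrelN : ∑ i, a i • v i = ∑ i, c i • v i := by
            apply ratCast_inj
            rw [ratCast_sum_smul, ratCast_sum_smul]
            rw [← sub_eq_zero, ← Finset.sum_sub_distrib]
            rw [← hzrel]
            refine Finset.sum_congr rfl fun i _ => ?_
            rw [← sub_smul]
            congr 1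
            push_cast [← hzi i]
            ring
          have hz0 : z i₀ ≠ 0 := by
            intro h0
            apply hg
            have := hz i₀
            rw [h0] at this
            have hMne : (M : ℚ) ≠ 0 := Nat.cast_ne_zero.mpr (by omega)
            field_simp at this
            exact (mul_eq_zero.mp (by rw [← this]; simp)).resolve_left hMne
          rcases (by rw [hadef i₀, hcdef i₀]; omega :
              a i₀ ≠ 0 ∨ c i₀ ≠ 0) with hcase | hcase
          · rw [linF_decomp b v a c hdisj hrelN i₀ hcase]
            exact IsFU.biUnion fun i _ => IsFU.biUnion fun r _ => ih _ _
          · rw [linF_decomp b v c a (fun i => (hdisj i).symm) hrelN.symm i₀ hcase]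
            exact IsFU.biUnion fun i _ => IsFU.biUnion fun r _ => ih _ _

end Decomp
section Blocks
variable {d : ℕ}

lemma IsSemilinear.union {S T : Set (Fin d → ℕ)} (h1 : IsSemilinear S) (h2 : IsSemilinear T) :
    IsSemilinear (S ∪ T) := IsFU.union h1 h2

lemma phi_eq_sum (φ : (Fin d → ℚ) →ₗ[ℚ] ℚ) (x : Fin d → ℕ) :
    φ (ratCast x) = ∑ j, (x j : ℚ) * φ (Pi.single j 1) := by
  have hx : ratCast x = ∑ j, (x j : ℚ) • (Pi.single j 1 : Fin d → ℚ) := by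
    funext i
    simp [ratCast, Finset.sum_apply, Pi.single_apply]
  rw [hx, map_sum]
  simp [map_smul, smul_eq_mul]

lemma exists_int_form (φ : (Fin d → ℚ) →ₗ[ℚ] ℚ) :
    ∃ (M : ℕ) (w₁ w₂ : Fin d → ℕ), 0 < M ∧
      ∀ x : Fin d → ℕ, (Fw w₁ x : ℚ) - (Fw w₂ x : ℚ) = (M : ℚ) * φ (ratCast x) := by
  obtain ⟨M, z, hM, hz⟩ := exists_int_mul (fun j => φ (Pi.single j 1))
  refine ⟨M, fun j => (z j).toNat, fun j => (-(z j)).toNat, hM, fun x => ?_⟩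
  have hnat : ∀ j, (((z j).toNat : ℕ) : ℚ) - (((-(z j)).toNat : ℕ) : ℚ) = ((z j : ℤ) : ℚ) := by
    intro j
    have h : (((z j).toNat : ℤ)) - (((-(z j)).toNat : ℤ)) = z j := by omega
    exact_mod_cast congrArg (fun t : ℤ => (t : ℚ)) h
  rw [phi_eq_sum, Finset.mul_sum]
  simp only [Fw_apply]
  push_cast
  rw [← Finset.sum_sub_distrib]
  refine Finset.sum_congr rfl fun j _ => ?_
  rw [← sub_mul, hnat j, hz j]
  ring

lemma isSemilinear_ne_block (φ : (Fin d → ℚ) →ₗ[ℚ] ℚ) (b : Fin d → ℕ) :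
    IsSemilinear {x : Fin d → ℕ | φ (ratCast x) ≠ φ (ratCast b)} := by
  obtain ⟨M, w₁, w₂, hM, hform⟩ := exists_int_form φ
  have hMne : (M : ℚ) ≠ 0 := Nat.cast_ne_zero.mpr (by omega)
  have key : {x : Fin d → ℕ | φ (ratCast x) ≠ φ (ratCast b)} =
      {x | Fw w₁ x + Fw w₂ b < Fw w₂ x + Fw w₁ b} ∪
      {x | Fw w₂ x + Fw w₁ b < Fw w₁ x + Fw w₂ b} := by
    ext x
    simp only [Set.mem_setOf_eq, Set.mem_union]
    have h1 := hform x
    have h2 := hform b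
    have hiff : φ (ratCast x) = φ (ratCast b) ↔
        Fw w₁ x + Fw w₂ b = Fw w₂ x + Fw w₁ b := by
      constructor
      · intro h
        have h3 : (Fw w₁ x : ℚ) - Fw w₂ x = (Fw w₁ b : ℚ) - Fw w₂ b := by rw [h1, h2, h]
        have h4 : ((Fw w₁ x + Fw w₂ b : ℕ) : ℚ) = ((Fw w₂ x + Fw w₁ b : ℕ) : ℚ) := by
          push_cast; linarith
        exact_mod_cast h4
      · intro h
        have h4 : ((Fw w₁ x + Fw w₂ b : ℕ) : ℚ) = ((Fw w₂ x + Fw w₁ b : ℕ) : ℚ) :=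
          congrArg _ h
        push_cast at h4
        have h5 : (M : ℚ) * φ (ratCast x) = (M : ℚ) * φ (ratCast b) := by
          rw [← h1, ← h2]; linarith
        exact mul_left_cancel₀ hMne h5
    rw [ne_eq, hiff]
    omega
  rw [key]
  exact (isSemilinear_lt w₁ w₂ (Fw w₂ b) (Fw w₁ b)).union (isSemilinear_lt w₂ w₁ (Fw w₁ b) (Fw w₂ b))

lemma nat_nomod_iff (A B M : ℕ) (hM : 0 < M) :
    (¬ ∃ t, A = B + M * t) ↔
      (A < B ∨ ∃ r ∈ Finset.Ico 1 M, ∃ t, A = B + M * t + r) := by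
  constructor
  · intro hne
    rcases Nat.lt_or_ge A B with h | h
    · exact Or.inl h
    · right
      have hdm : M * ((A - B) / M) + (A - B) % M = A - B := Nat.div_add_mod _ _
      have hrlt : (A - B) % M < M := Nat.mod_lt _ hM
      rcases Nat.eq_zero_or_pos ((A - B) % M) with h0 | h0
      · exact absurd ⟨(A - B) / M, by omega⟩ hne
      · exact ⟨(A - B) % M, Finset.mem_Ico.mpr ⟨h0, hrlt⟩, (A - B) / M, by omega⟩
  · rintro (h | ⟨r, hr, t, ht⟩) ⟨t', ht'⟩
    · exact absurd (ht' ▸ Nat.le_add_right B (M * t')) (Nat.not_le.mpr h)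
    · rw [Finset.mem_Ico] at hr
      have h2 : B + (M * t + r) = B + M * t' := by
        rw [← add_assoc, ← ht, ht']
      have h3 : M * t + r = M * t' := Nat.add_left_cancel h2
      rcases Nat.lt_or_ge t t' with hlt2 | hle
      · have h4 : M * (t + 1) ≤ M * t' := Nat.mul_le_mul_left M hlt2
        rw [Nat.mul_add, mul_one, ← h3] at h4
        have := Nat.le_of_add_le_add_left h4
        omega
      · have h4 : M * t' ≤ M * t := Nat.mul_le_mul_left M hle
        have h5 : M * t + r ≤ M * t + 0 := by rw [add_zero, h3]; exact h4
        have := Nat.le_of_add_le_add_left h5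
        omega

lemma isSemilinear_notnat_block (φ : (Fin d → ℚ) →ₗ[ℚ] ℚ) (b : Fin d → ℕ) :
    IsSemilinear {x : Fin d → ℕ | ¬ ∃ t : ℕ, φ (ratCast x) = φ (ratCast b) + t} := by
  obtain ⟨M, w₁, w₂, hM, hform⟩ := exists_int_form φ
  have hMne : (M : ℚ) ≠ 0 := Nat.cast_ne_zero.mpr (by omega)
  have hiff : ∀ x : Fin d → ℕ, (∃ t : ℕ, φ (ratCast x) = φ (ratCast b) + t) ↔
      (∃ t : ℕ, Fw w₁ x + Fw w₂ b = Fw w₂ x + Fw w₁ b + M * t) := by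
    intro x
    have h1 := hform x
    have h2 := hform b
    constructor
    · rintro ⟨t, ht⟩
      refine ⟨t, ?_⟩
      have h3 : (Fw w₁ x : ℚ) - Fw w₂ x = ((Fw w₁ b : ℚ) - Fw w₂ b) + M * t := by
        rw [h1, h2, ht]; ring
      have h4 : ((Fw w₁ x + Fw w₂ b : ℕ) : ℚ) = ((Fw w₂ x + Fw w₁ b + M * t : ℕ) : ℚ) := by
        push_cast; linarith
      exact_mod_cast h4
    · rintro ⟨t, ht⟩
      refine ⟨t, ?_⟩
      have h4 : ((Fw w₁ x + Fw w₂ b : ℕ) : ℚ) = ((Fw w₂ x + Fw w₁ b + M * t : ℕ) : ℚ) :=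
        congrArg _ ht
      push_cast at h4
      have h5 : (M : ℚ) * φ (ratCast x) = (M : ℚ) * (φ (ratCast b) + t) := by
        rw [← h1]
        have : (M : ℚ) * (φ (ratCast b) + (t : ℚ)) = ((Fw w₁ b : ℚ) - Fw w₂ b) + M * t := by
          rw [h2]; ring
        rw [this]
        linarith
      exact mul_left_cancel₀ hMne h5
  have key : {x : Fin d → ℕ | ¬ ∃ t : ℕ, φ (ratCast x) = φ (ratCast b) + t} =
      {x | Fw w₁ x + Fw w₂ b < Fw w₂ x + Fw w₁ b} ∪
      ⋃ r ∈ Finset.Ico 1 M,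
        {x | ∃ t : ℕ, Fw w₁ x + Fw w₂ b = Fw w₂ x + (Fw w₁ b + r) + M * t} := by
    ext x
    simp only [Set.mem_setOf_eq, Set.mem_union, Set.mem_iUnion, exists_prop]
    rw [hiff x, nat_nomod_iff _ _ _ hM]
    constructor
    · rintro (h | ⟨r, hr, t, ht⟩)
      · exact Or.inl h
      · exact Or.inr ⟨r, hr, t, by rw [ht]; ring⟩
    · rintro (h | ⟨r, hr, t, ht⟩)
      · exact Or.inl h
      · exact Or.inr ⟨r, hr, t, by rw [ht]; ring⟩
  rw [key]
  refine (isSemilinear_lt w₁ w₂ (Fw w₂ b) (Fw w₁ b)).union (isSemilinear_biUnion fun r _ => ?_)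
  exact isSemilinear_exists_eq w₁ w₂ (Fw w₂ b) (Fw w₁ b + r) M

end Blocks
section ComplSimple
variable {d n : ℕ}

lemma isSemilinear_iUnion_fintype {ι : Type*} [Fintype ι] {T : ι → Set (Fin d → ℕ)}
    (h : ∀ u, IsSemilinear (T u)) : IsSemilinear (⋃ u, T u) := by
  classical
  have he : (⋃ u, T u) = ⋃ u ∈ (Finset.univ : Finset ι), T u := by simp
  rw [he]
  exact isSemilinear_biUnion fun u _ => h u

lemma exists_basis_emb {v : Fin n → Fin d → ℕ}
    (hli : LinearIndependent ℚ (fun i => ratCast (v i))) :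
    ∃ (ι : Type) (_ : Fintype ι) (B : Module.Basis ι ℚ (Fin d → ℚ)) (emb : Fin n → ι),
      Function.Injective emb ∧ ∀ i, B (emb i) = ratCast (v i) := by
  classical
  have hinj : Function.Injective (fun i => ratCast (v i)) := hli.injective
  have hls : LinearIndepOn ℚ id (Set.range (fun i => ratCast (v i))) :=
    hli.linearIndepOn_id
  let B := Module.Basis.extend hls
  haveI : Fintype ↥(hls.extend (Set.subset_univ _)) := FiniteDimensional.fintypeBasisIndex B
  refine ⟨_, inferInstance, B,
    fun i => ⟨ratCast (v i), hls.subset_extend _ ⟨i, rfl⟩⟩, ?_, ?_⟩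
  · intro i j hij
    apply hinj
    exact congrArg Subtype.val hij
  · intro i
    exact Module.Basis.extend_apply_self hls _

theorem isSemilinear_compl_simple {S : Set (Fin d → ℕ)} (h : IsSimple S) :
    IsSemilinear Sᶜ := by
  classical
  obtain ⟨b, n, v, hli, rfl⟩ := h
  obtain ⟨ι, hfin, B, emb, hembinj, hemb⟩ := exists_basis_emb hli
  have hcoord : ∀ (k : Fin n → ℚ) (u : ι),
      B.repr (∑ i, k i • ratCast (v i)) u = ∑ i, k i * (if emb i = u then 1 else 0) := by
    intro k u
    have h0 : (∑ i, k i • ratCast (v i)) = ∑ i, k i • B (emb i) :=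
      Finset.sum_congr rfl fun i _ => by rw [hemb i]
    rw [h0, map_sum]
    simp [map_smul, Module.Basis.repr_self, Finsupp.single_apply, Finsupp.smul_apply, smul_eq_mul]
  have hc1 : ∀ (k : Fin n → ℚ) (i : Fin n),
      B.repr (∑ i', k i' • ratCast (v i')) (emb i) = k i := by
    intro k i
    rw [hcoord k (emb i), Finset.sum_eq_single i ?_ ?_]
    · rw [if_pos rfl, mul_one]
    · intro j _ hj
      rw [if_neg (fun h => hj (hembinj h)), mul_zero]
    · intro h; exact absurd (Finset.mem_univ i) h
  have hc2 : ∀ (k : Fin n → ℚ) (u : ι), u ∉ Set.range emb →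
      B.repr (∑ i', k i' • ratCast (v i')) u = 0 := by
    intro k u hu
    rw [hcoord k u]
    exact Finset.sum_eq_zero fun i _ => by
      rw [if_neg (fun h => hu ⟨i, h⟩), mul_zero]
  have hmem : ∀ x : Fin d → ℕ, x ∈ linF b v ↔ ∀ u : ι,
      ((u ∈ Set.range emb →
        ∃ t : ℕ, B.coord u (ratCast x) = B.coord u (ratCast b) + t) ∧
       (u ∉ Set.range emb → B.coord u (ratCast x) = B.coord u (ratCast b))) := by
    intro x
    constructor
    · rintro ⟨k, rfl⟩ u
      have hcast : ratCast (b + ∑ i, k i • v i)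
          = ratCast b + ∑ i, ((k i : ℚ)) • ratCast (v i) := by
        rw [ratCast_add, ratCast_sum_smul]
      constructor
      · rintro ⟨i, rfl⟩
        refine ⟨k i, ?_⟩
        rw [hcast, map_add, Module.Basis.coord_apply, Module.Basis.coord_apply]
        congr 1
        exact hc1 (fun i => (k i : ℚ)) i
      · intro hnr
        rw [hcast, map_add, Module.Basis.coord_apply, Module.Basis.coord_apply, hc2 _ u hnr, add_zero]
    · intro hall
      obtain ⟨k, hk⟩ : ∃ k : Fin n → ℕ, ∀ i,
          B.coord (emb i) (ratCast x) = B.coord (emb i) (ratCast b) + k i := by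
        choose f hf using fun i => (hall (emb i)).1 ⟨i, rfl⟩
        exact ⟨f, hf⟩
      have hrepr : B.repr (ratCast x - ratCast b)
          = B.repr (∑ i, ((k i : ℚ)) • ratCast (v i)) := by
        ext u
        by_cases h1 : u ∈ Set.range emb
        · obtain ⟨i, rfl⟩ := h1
          have hki := hk i
          rw [Module.Basis.coord_apply, Module.Basis.coord_apply] at hki
          rw [map_sub, Finsupp.sub_apply, hki, hc1 (fun i => (k i : ℚ)) i]
          ring
        · have h2 := (hall u).2 h1
          rw [Module.Basis.coord_apply, Module.Basis.coord_apply] at h2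
          rw [map_sub, Finsupp.sub_apply, h2, hc2 _ u h1]
          ring
      have heq : ratCast x - ratCast b = ∑ i, ((k i : ℚ)) • ratCast (v i) :=
        B.repr.injective hrepr
      refine ⟨k, ratCast_inj ?_⟩
      rw [ratCast_add, ratCast_sum_smul, ← heq]
      abel
  have key : (linF b v)ᶜ = ⋃ u : ι, (if u ∈ Set.range emb
      then {x : Fin d → ℕ | ¬ ∃ t : ℕ, B.coord u (ratCast x) = B.coord u (ratCast b) + t}
      else {x : Fin d → ℕ | B.coord u (ratCast x) ≠ B.coord u (ratCast b)}) := by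
    ext x
    simp only [Set.mem_compl_iff, hmem x, not_forall, Set.mem_iUnion]
    constructor
    · rintro ⟨u, hu⟩
      refine ⟨u, ?_⟩
      by_cases h1 : u ∈ Set.range emb
      · rw [if_pos h1]
        intro hex
        exact hu ⟨fun _ => hex, fun h2 => absurd h1 h2⟩
      · rw [if_neg h1]
        intro heq
        exact hu ⟨fun h2 => absurd h2 h1, fun _ => heq⟩
    · rintro ⟨u, hu⟩
      refine ⟨u, ?_⟩
      by_cases h1 : u ∈ Set.range emb
      · rw [if_pos h1] at hu
        rintro ⟨hP, _⟩
        exact hu (hP h1)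
      · rw [if_neg h1] at hu
        rintro ⟨_, hQ⟩
        exact hu (hQ h1)
  rw [key]
  refine isSemilinear_iUnion_fintype fun u => ?_
  by_cases h1 : u ∈ Set.range emb
  · rw [if_pos h1]
    exact isSemilinear_notnat_block (B.coord u) b
  · rw [if_neg h1]
    exact isSemilinear_ne_block (B.coord u) b

end ComplSimple

section Main
variable {d : ℕ}

lemma isSemilinear_compl_of_isLinear {L : Set (Fin d → ℕ)} (h : IsLinear L) :
    IsSemilinear Lᶜ := by
  obtain ⟨b, n, v, rfl⟩ := isLinear_iff.mp h
  obtain ⟨m, T, hT, hU⟩ := linF_isFU_simple b v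
  rw [hU, Set.compl_iUnion]
  exact isSemilinear_iInter_fin fun j => isSemilinear_compl_simple (hT j)

lemma IsSemilinear.compl {S : Set (Fin d → ℕ)} (h : IsSemilinear S) : IsSemilinear Sᶜ := by
  obtain ⟨nn, L, hL, rfl⟩ := h
  rw [Set.compl_iUnion]
  exact isSemilinear_iInter_fin fun i => isSemilinear_compl_of_isLinear (hL i)

end Main

/-- A subset of ℕ^d is semilinear iff its complement is semilinear. -/
theorem semilinear_iff_compl_semilinear {d : ℕ} (S : Set (Fin d → ℕ)) :
    IsSemilinear S ↔ IsSemilinear Sᶜ :=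
  ⟨IsSemilinear.compl, fun h => by simpa using h.compl⟩
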